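/- arXiv:2601.06766 — 2 statements merged into one kernel-verified Lean document; each statement's English description precedes it below -/
import Mathlib

section
/- Let A ∈ ℝ^{m×m} and D ∈ ℝ^{k×k} be symmetric positive definite matrices and B ∈ ℝ^{m×k}. If λ_min(A) · λ_min(D) > ‖B‖_F², then the block matrix G = [[A, B],[Bᵀ, D]] is symmetric positive definite. -/
open Matrix Finset

lemma rayleigh_lower {n : ℕ} {A : Matrix (Fin n) (Fin n) ℝ} (hA : A.IsHermitian) {c : ℝ}
    (hc : ∀ i, c ≤ hA.eigenvalues i) (x : Fin n → ℝ) :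
    c * (x ⬝ᵥ x) ≤ x ⬝ᵥ A *ᵥ x := by
  set U : Matrix (Fin n) (Fin n) ℝ := (hA.eigenvectorUnitary : Matrix (Fin n) (Fin n) ℝ) with hUdef
  have hU2 : U * star U = 1 := (Matrix.mem_unitaryGroup_iff).mp hA.eigenvectorUnitary.2
  set w : Fin n → ℝ := star U *ᵥ x with hw
  have hxw : x ᵥ* U = w := by
    rw [hw, Matrix.star_eq_conjTranspose, conjTranspose_eq_transpose_of_trivial,
      mulVec_transpose]
  have hQ : x ⬝ᵥ A *ᵥ x = ∑ i, hA.eigenvalues i * (w i)^2 := by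
    conv_lhs => rw [hA.spectral_theorem, Unitary.conjStarAlgAut_apply, ← hUdef]
    rw [← mulVec_mulVec, ← mulVec_mulVec, dotProduct_mulVec, hxw]
    simp only [dotProduct, mulVec_diagonal, ← hw]
    exact Finset.sum_congr rfl fun i _ => by simp [Function.comp]; ring
  have hnorm : x ⬝ᵥ x = ∑ i, (w i)^2 := by
    have : w ⬝ᵥ w = x ⬝ᵥ x := by
      rw [hw]
      nth_rewrite 1 [Matrix.star_eq_conjTranspose, conjTranspose_eq_transpose_of_trivial]
      rw [mulVec_transpose, dotProduct_mulVec, vecMul_vecMul, hU2, vecMul_one]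
    rw [← this]
    simp [dotProduct, sq]
  rw [hQ, hnorm, Finset.mul_sum]
  exact Finset.sum_le_sum fun i _ => mul_le_mul_of_nonneg_right (hc i) (sq_nonneg _)

/-- If `A`, `D` are symmetric positive definite and
`λ_min(A) · λ_min(D) > ‖B‖_F²`, then the block matrix `[[A, B], [Bᵀ, D]]`
is symmetric positive definite. -/
theorem blockMatrix_posDef_of_lmin_mul_lmin_gt_frobenius {m k : ℕ}
    (hm : 0 < m) (hk : 0 < k)
    (A : Matrix (Fin m) (Fin m) ℝ) (D : Matrix (Fin k) (Fin k) ℝ)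
    (B : Matrix (Fin m) (Fin k) ℝ)
    (hA : A.PosDef) (hD : D.PosDef)
    (hgap : (univ.inf' (univ_nonempty_iff.mpr (Fin.pos_iff_nonempty.mp hm))
        hA.1.eigenvalues) *
      (univ.inf' (univ_nonempty_iff.mpr (Fin.pos_iff_nonempty.mp hk))
        hD.1.eigenvalues) > ∑ i, ∑ j, (B i j) ^ 2) :
    (Matrix.fromBlocks A B Bᵀ D).PosDef := by
  set lA := univ.inf' (univ_nonempty_iff.mpr (Fin.pos_iff_nonempty.mp hm)) hA.1.eigenvalues
    with hlAdef
  set lD := univ.inf' (univ_nonempty_iff.mpr (Fin.pos_iff_nonempty.mp hk)) hD.1.eigenvalues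
    with hlDdef
  set F := ∑ i, ∑ j, (B i j) ^ 2 with hFdef
  have hlA_le : ∀ i, lA ≤ hA.1.eigenvalues i := fun i => inf'_le _ (mem_univ i)
  have hlD_le : ∀ i, lD ≤ hD.1.eigenvalues i := fun i => inf'_le _ (mem_univ i)
  have hlA_pos : 0 < lA := by
    obtain ⟨i, -, hi⟩ := Finset.exists_mem_eq_inf' (univ_nonempty_iff.mpr
      (Fin.pos_iff_nonempty.mp hm)) hA.1.eigenvalues
    rw [hlAdef, hi]; exact hA.eigenvalues_pos i
  have hlD_pos : 0 < lD := by
    obtain ⟨i, -, hi⟩ := Finset.exists_mem_eq_inf' (univ_nonempty_iff.mpr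
      (Fin.pos_iff_nonempty.mp hk)) hD.1.eigenvalues
    rw [hlDdef, hi]; exact hD.eigenvalues_pos i
  have hF0 : 0 ≤ F := by positivity
  refine posDef_iff_dotProduct_mulVec.mpr ⟨?_, ?_⟩
  · show (fromBlocks A B Bᵀ D)ᴴ = _
    rw [fromBlocks_conjTranspose, hA.1.eq, hD.1.eq,
      conjTranspose_eq_transpose_of_trivial B,
      conjTranspose_eq_transpose_of_trivial Bᵀ, transpose_transpose]
  · intro x hx
    obtain ⟨u, v, rfl⟩ : ∃ u v, x = Sum.elim u v :=
      ⟨x ∘ Sum.inl, x ∘ Sum.inr, (Sum.elim_comp_inl_inr x).symm⟩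
    set a := u ⬝ᵥ u with ha'
    set b := v ⬝ᵥ v with hb'
    set S := u ⬝ᵥ B *ᵥ v with hS'
    have hQ : star (Sum.elim u v) ⬝ᵥ (fromBlocks A B Bᵀ D) *ᵥ (Sum.elim u v)
        = u ⬝ᵥ A *ᵥ u + S + (S + v ⬝ᵥ D *ᵥ v) := by
      rw [star_trivial, fromBlocks_mulVec]
      simp only [Sum.elim_comp_inl, Sum.elim_comp_inr]
      rw [sumElim_dotProduct_sumElim, dotProduct_add, dotProduct_add]
      congr 2
      rw [dotProduct_mulVec, vecMul_transpose, dotProduct_comm]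
    have ha : 0 ≤ a := Finset.sum_nonneg fun i _ => mul_self_nonneg _
    have hb : 0 ≤ b := Finset.sum_nonneg fun i _ => mul_self_nonneg _
    have hS2 : S ^ 2 ≤ F * (a * b) := by
      have hSsum : S = ∑ p : Fin m × Fin k, B p.1 p.2 * (u p.1 * v p.2) := by
        rw [hS', dotProduct, Fintype.sum_prod_type]
        simp only [mulVec, dotProduct, Finset.mul_sum]
        exact Finset.sum_congr rfl fun i _ => Finset.sum_congr rfl fun j _ => by ring
      have hcs := Finset.sum_mul_sq_le_sq_mul_sq univ
        (fun p : Fin m × Fin k => B p.1 p.2) (fun p => u p.1 * v p.2)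
      have h1 : ∑ p : Fin m × Fin k, (B p.1 p.2) ^ 2 = F := by
        rw [hFdef, Fintype.sum_prod_type]
      have h2 : ∑ p : Fin m × Fin k, (u p.1 * v p.2) ^ 2 = a * b := by
        rw [Fintype.sum_prod_type, ha', hb', dotProduct, dotProduct,
          Finset.sum_mul_sum]
        exact Finset.sum_congr rfl fun i _ => Finset.sum_congr rfl fun j _ => by ring
      rw [hSsum]
      calc (∑ p : Fin m × Fin k, B p.1 p.2 * (u p.1 * v p.2)) ^ 2
          ≤ (∑ p : Fin m × Fin k, (B p.1 p.2) ^ 2) *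
            ∑ p : Fin m × Fin k, (u p.1 * v p.2) ^ 2 := hcs
        _ = F * (a * b) := by rw [h1, h2]
    have hP : 0 < lA * a + lD * b := by
      have : u ≠ 0 ∨ v ≠ 0 := by
        by_contra h
        push_neg at h
        exact hx (by rw [h.1, h.2]; ext (i | j) <;> simp)
      rcases this with h | h
      · have : 0 < a := lt_of_le_of_ne ha fun h0 =>
          h ((dotProduct_self_eq_zero).mp h0.symm)
        nlinarith [mul_nonneg hlD_pos.le hb]
      · have : 0 < b := lt_of_le_of_ne hb fun h0 =>
          h ((dotProduct_self_eq_zero).mp h0.symm)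
        nlinarith [mul_nonneg hlA_pos.le ha]
    have key : 0 < lA * a + 2 * S + lD * b := by
      rcases (mul_nonneg ha hb).eq_or_lt with hab | hab
      · have : S = 0 := by nlinarith [sq_nonneg S]
        linarith
      · nlinarith [sq_nonneg (lA * a - lD * b), hS2,
          mul_pos (sub_pos.mpr hgap) hab, hP]
    have hrA := rayleigh_lower hA.1 hlA_le u
    have hrD := rayleigh_lower hD.1 hlD_le v
    rw [hQ]
    rw [← ha'] at hrA
    rw [← hb'] at hrD
    linarith
end

section
/- Under the hypotheses of the previous two statements, suppose additionally that all eigenvalues of Ã + BF_d have negative real part, set β = -2 max_i Re λ_i(Ã+BF_d) > 0, assume ‖exp((Ã+BF_d)t)‖₂² ≤ e^{-βt}, and F_d ≠ F_c. Then the distributed cost J_d* = ∫₀^∞ x(t)ᵀ(Q_xx + F_dᵀQ_uuF_d)x(t)dt with x(t) = exp((Ã+BF_d)t)x₀ and the centralized optimal cost J_c* = x₀ᵀQ̃x₀ satisfy 0 ≤ J_d* - J_c* ≤ (‖(F_d - F_c)ᵀ Q_uu (F_d - F_c)‖₂ / β) ‖x₀‖², with strict positivity of J_d* - J_c* whenever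 (F_d - F_c)x(t) is not identically zero. -/
open Matrix MeasureTheory

/-- Spectral (operator 2-) norm of a real matrix, w.r.t. Euclidean norms. -/
noncomputable def specNorm {m k : ℕ} (B : Matrix (Fin m) (Fin k) ℝ) : ℝ :=
  ‖LinearMap.toContinuousLinearMap (Matrix.toEuclideanLin B)‖

/-- Euclidean norm of a vector in `ℝ^n`. -/
noncomputable def enorm {n : ℕ} (x : Fin n → ℝ) : ℝ :=
  Real.sqrt (∑ i, (x i) ^ 2)

lemma enorm_eq_norm {n : ℕ} (v : Fin n → ℝ) :
    _root_.enorm v = ‖(WithLp.equiv 2 (Fin n → ℝ)).symm v‖ := by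
  rw [_root_.enorm, EuclideanSpace.norm_eq]
  congr 1
  apply Finset.sum_congr rfl
  intro i _
  simp [Real.norm_eq_abs, sq_abs]

lemma enorm_nonneg' {n : ℕ} (v : Fin n → ℝ) : 0 ≤ _root_.enorm v := Real.sqrt_nonneg _

lemma specNorm_nonneg {m k : ℕ} (M : Matrix (Fin m) (Fin k) ℝ) : 0 ≤ specNorm M := norm_nonneg _

lemma enorm_mulVec_le {m k : ℕ} (M : Matrix (Fin m) (Fin k) ℝ) (v : Fin k → ℝ) :
    _root_.enorm (M *ᵥ v) ≤ specNorm M * _root_.enorm v := by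
  rw [enorm_eq_norm, enorm_eq_norm]
  have h := (LinearMap.toContinuousLinearMap (Matrix.toEuclideanLin M)).le_opNorm
    ((WithLp.equiv 2 (Fin k → ℝ)).symm v)
  simpa [specNorm, WithLp.equiv_symm_apply, Matrix.toEuclideanLin_apply_piLp_toLp] using h

lemma abs_dot_le {n : ℕ} (v w : Fin n → ℝ) : |v ⬝ᵥ w| ≤ _root_.enorm v * _root_.enorm w := by
  have h := abs_real_inner_le_norm ((WithLp.equiv 2 (Fin n → ℝ)).symm v)
    ((WithLp.equiv 2 (Fin n → ℝ)).symm w)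
  rw [← enorm_eq_norm, ← enorm_eq_norm] at h
  have : (inner ℝ ((WithLp.equiv 2 (Fin n → ℝ)).symm v) ((WithLp.equiv 2 (Fin n → ℝ)).symm w) : ℝ) = v ⬝ᵥ w := by
    rw [PiLp.inner_apply]
    simp [dotProduct, RCLike.inner_apply, mul_comm]
  rwa [this] at h

lemma abs_quad_le_specNorm {n : ℕ} (M : Matrix (Fin n) (Fin n) ℝ) (v : Fin n → ℝ) :
    |v ⬝ᵥ (M *ᵥ v)| ≤ specNorm M * _root_.enorm v ^ 2 := by
  calc |v ⬝ᵥ (M *ᵥ v)| ≤ _root_.enorm v * _root_.enorm (M *ᵥ v) := abs_dot_le _ _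
    _ ≤ _root_.enorm v * (specNorm M * _root_.enorm v) := by
        exact mul_le_mul_of_nonneg_left (enorm_mulVec_le M v) (enorm_nonneg' v)
    _ = specNorm M * _root_.enorm v ^ 2 := by ring

lemma dot_mulVec_left {n m : ℕ} (A : Matrix (Fin m) (Fin n) ℝ) (v : Fin n → ℝ) (w : Fin m → ℝ) :
    (A *ᵥ v) ⬝ᵥ w = v ⬝ᵥ (Aᵀ *ᵥ w) := by
  rw [dotProduct_comm, Matrix.dotProduct_mulVec, ← dotProduct_comm,
    Matrix.mulVec_transpose]

lemma hasDerivAt_expMulVec {n : ℕ} (A : Matrix (Fin n) (Fin n) ℝ) (x₀ : Fin n → ℝ) (t : ℝ) :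
    HasDerivAt (fun u : ℝ => NormedSpace.exp (u • A) *ᵥ x₀)
      (A *ᵥ (NormedSpace.exp (t • A) *ᵥ x₀)) t := by
  letI : SeminormedRing (Matrix (Fin n) (Fin n) ℝ) := Matrix.linftyOpSemiNormedRing
  letI : NormedRing (Matrix (Fin n) (Fin n) ℝ) := Matrix.linftyOpNormedRing
  letI : NormedAlgebra ℝ (Matrix (Fin n) (Fin n) ℝ) := Matrix.linftyOpNormedAlgebra
  have hE : HasDerivAt (fun u : ℝ => NormedSpace.exp (u • A))
      (A * NormedSpace.exp (t • A)) t := hasDerivAt_exp_smul_const' A t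
  let L : Matrix (Fin n) (Fin n) ℝ →ₗ[ℝ] (Fin n → ℝ) :=
    { toFun := fun M => M *ᵥ x₀
      map_add' := fun M N => Matrix.add_mulVec M N x₀
      map_smul' := fun c M => Matrix.smul_mulVec c M x₀ }
  have hL := (LinearMap.toContinuousLinearMap L).hasFDerivAt
    (x := NormedSpace.exp (t • A))
  have h2 := hL.comp_hasDerivAt t hE
  have : (LinearMap.toContinuousLinearMap L) (A * NormedSpace.exp (t • A)) =
      A *ᵥ (NormedSpace.exp (t • A) *ᵥ x₀) := by
    simp [L, LinearMap.coe_toContinuousLinearMap', ← Matrix.mulVec_mulVec]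
  replace h2 := h2.congr_deriv this
  exact h2

lemma hasDerivAt_quadForm {n : ℕ} {x : ℝ → Fin n → ℝ} {x' : Fin n → ℝ} {t : ℝ}
    (hx : HasDerivAt x x' t) (Q : Matrix (Fin n) (Fin n) ℝ) :
    HasDerivAt (fun s => x s ⬝ᵥ (Q *ᵥ x s)) (x' ⬝ᵥ (Q *ᵥ x t) + x t ⬝ᵥ (Q *ᵥ x')) t := by
  have hxi : ∀ i, HasDerivAt (fun s => x s i) (x' i) t := fun i => hasDerivAt_pi.mp hx i
  have hyi : ∀ i, HasDerivAt (fun s => (Q *ᵥ x s) i) ((Q *ᵥ x') i) t := by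
    intro i
    simp only [Matrix.mulVec, dotProduct]
    exact HasDerivAt.fun_sum fun j _ => (hxi j).const_mul (Q i j)
  have h : HasDerivAt (fun s => ∑ i, x s i * (Q *ᵥ x s) i)
      (∑ i, (x' i * (Q *ᵥ x t) i + x t i * (Q *ᵥ x') i)) t :=
    HasDerivAt.fun_sum fun i _ => (hxi i).mul (hyi i)
  simpa [dotProduct, Finset.sum_add_distrib] using h

lemma key_identity {n m : ℕ} (Atil : Matrix (Fin n) (Fin n) ℝ) (B : Matrix (Fin n) (Fin m) ℝ)
    (Qxx Qtil : Matrix (Fin n) (Fin n) ℝ) (Quu : Matrix (Fin m) (Fin m) ℝ)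
    (Fc Fd : Matrix (Fin m) (Fin n) ℝ)
    (hQuu : Quu.PosDef) (hQtil : Qtil.PosDef)
    (hRiccati : Qtil * Atil + Atilᵀ * Qtil + Qxx - Qtil * B * Quu⁻¹ * Bᵀ * Qtil = 0)
    (hFc : Fc = -(Quu⁻¹ * Bᵀ * Qtil)) :
    (Fd - Fc)ᵀ * Quu * (Fd - Fc) =
      Qxx + Fdᵀ * Quu * Fd + Qtil * (Atil + B * Fd) + (Atil + B * Fd)ᵀ * Qtil := by
  have hQuuT : Quuᵀ = Quu := by
    have h := hQuu.1
    rwa [Matrix.IsHermitian, Matrix.conjTranspose_eq_transpose_of_trivial] at h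
  have hQtilT : Qtilᵀ = Qtil := by
    have h := hQtil.1
    rwa [Matrix.IsHermitian, Matrix.conjTranspose_eq_transpose_of_trivial] at h
  have hQuuInvT : (Quu⁻¹)ᵀ = Quu⁻¹ := by rw [Matrix.transpose_nonsing_inv, hQuuT]
  have hdet : IsUnit Quu.det := hQuu.det_pos.ne'.isUnit
  have hinv : Quu⁻¹ * Quu = 1 := Matrix.nonsing_inv_mul _ hdet
  have hinv' : Quu * Quu⁻¹ = 1 := Matrix.mul_nonsing_inv _ hdet
  have hFcT : Fcᵀ = -(Qtil * (B * Quu⁻¹)) := by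
    rw [hFc]
    simp [Matrix.transpose_mul, hQuuInvT, hQtilT, Matrix.mul_assoc]
  have h1 : Fcᵀ * Quu = -(Qtil * B) := by
    rw [hFcT, Matrix.neg_mul, Matrix.mul_assoc, Matrix.mul_assoc, hinv, Matrix.mul_one]
  have h2 : Quu * Fc = -(Bᵀ * Qtil) := by
    rw [hFc, Matrix.mul_neg, ← Matrix.mul_assoc, ← Matrix.mul_assoc, hinv', Matrix.one_mul]
  have hR' : Qxx = Qtil * B * Quu⁻¹ * Bᵀ * Qtil - Qtil * Atil - Atilᵀ * Qtil := by
    have h := sub_eq_zero.mp hRiccati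
    rw [← h]; abel
  have e1 : Fcᵀ * Quu * Fd = -(Qtil * B * Fd) := by rw [h1, Matrix.neg_mul]
  have e2 : Fdᵀ * Quu * Fc = -(Fdᵀ * (Bᵀ * Qtil)) := by
    rw [Matrix.mul_assoc, h2, Matrix.mul_neg]
  have e3 : Fcᵀ * Quu * Fc = Qtil * B * Quu⁻¹ * Bᵀ * Qtil := by
    rw [h1, hFc, Matrix.neg_mul, Matrix.mul_neg, neg_neg]
    simp [Matrix.mul_assoc]
  calc (Fd - Fc)ᵀ * Quu * (Fd - Fc)
      = Fdᵀ * Quu * Fd - Fdᵀ * Quu * Fc - Fcᵀ * Quu * Fd + Fcᵀ * Quu * Fc := by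
        rw [Matrix.transpose_sub]
        simp only [Matrix.sub_mul, Matrix.mul_sub]
        abel
    _ = Qxx + Fdᵀ * Quu * Fd + Qtil * (Atil + B * Fd) + (Atil + B * Fd)ᵀ * Qtil := by
        rw [e1, e2, e3, hR', Matrix.transpose_add, Matrix.transpose_mul]
        simp only [Matrix.mul_add, Matrix.add_mul, Matrix.mul_assoc, sub_eq_add_neg, neg_neg]
        abel

/-- Performance gap between distributed and centralized LQR: with
`Q̃ ≻ 0` solving the centralized Riccati equation, `F_c = -Q_uu⁻¹BᵀQ̃`, a stabilizing
distributed gain `F_d ≠ F_c` whose closed loop satisfies `‖exp((Ã+BF_d)t)‖₂² ≤ e^{-βt}`,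
the distributed cost `J_d*` and the centralized optimal cost `J_c* = x₀ᵀQ̃x₀` satisfy
`0 ≤ J_d* - J_c* ≤ (‖(F_d-F_c)ᵀQ_uu(F_d-F_c)‖₂/β)‖x₀‖²`, with strict positivity
whenever `(F_d-F_c)x(t)` is not identically zero. -/
theorem distributed_vs_centralized_cost_gap {n m : ℕ}
    (Atil : Matrix (Fin n) (Fin n) ℝ) (B : Matrix (Fin n) (Fin m) ℝ)
    (Qxx Qtil : Matrix (Fin n) (Fin n) ℝ) (Quu : Matrix (Fin m) (Fin m) ℝ)
    (Fc Fd : Matrix (Fin m) (Fin n) ℝ) (β : ℝ) (x₀ : Fin n → ℝ)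
    (hQxx : Qxx.PosSemidef) (hQuu : Quu.PosDef) (hQtil : Qtil.PosDef)
    (hRiccati : Qtil * Atil + Atilᵀ * Qtil + Qxx - Qtil * B * Quu⁻¹ * Bᵀ * Qtil = 0)
    (hFc : Fc = -(Quu⁻¹ * Bᵀ * Qtil))
    (hHurwitz : ∀ μ ∈ spectrum ℂ ((Atil + B * Fd).map (algebraMap ℝ ℂ)), μ.re < 0)
    (hβ : 0 < β)
    (hβdef : β = -2 * (⨆ μ ∈ spectrum ℂ ((Atil + B * Fd).map (algebraMap ℝ ℂ)), μ.re))
    (hdecay : ∀ t : ℝ, 0 ≤ t →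
      (specNorm (NormedSpace.exp (t • (Atil + B * Fd)))) ^ 2 ≤ Real.exp (-β * t))
    (hFdFc : Fd ≠ Fc)
    (x : ℝ → Fin n → ℝ)
    (hx : ∀ t : ℝ, x t = NormedSpace.exp (t • (Atil + B * Fd)) *ᵥ x₀)
    (Jd Jc : ℝ)
    (hJd : Jd = ∫ t in Set.Ici (0 : ℝ),
      (x t) ⬝ᵥ ((Qxx + Fdᵀ * Quu * Fd) *ᵥ (x t)))
    (hJc : Jc = x₀ ⬝ᵥ (Qtil *ᵥ x₀)) :
    (0 ≤ Jd - Jc) ∧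
    (Jd - Jc ≤ specNorm ((Fd - Fc)ᵀ * Quu * (Fd - Fc)) / β * (_root_.enorm x₀) ^ 2) ∧
    ((∃ t : ℝ, 0 ≤ t ∧ (Fd - Fc) *ᵥ (x t) ≠ 0) → 0 < Jd - Jc) := by
  set A := Atil + B * Fd with hAdef
  set Mg := (Fd - Fc)ᵀ * Quu * (Fd - Fc) with hMg
  set Mf := Qxx + Fdᵀ * Quu * Fd with hMf
  set f : ℝ → ℝ := fun t => x t ⬝ᵥ (Mf *ᵥ x t) with hf
  set g : ℝ → ℝ := fun t => x t ⬝ᵥ (Mg *ᵥ x t) with hg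
  set V : ℝ → ℝ := fun t => x t ⬝ᵥ (Qtil *ᵥ x t) with hV
  have hkey := key_identity Atil B Qxx Qtil Quu Fc Fd hQuu hQtil hRiccati hFc
  -- derivative of x
  have hxfun : (fun u : ℝ => NormedSpace.exp (u • A) *ᵥ x₀) = x := by
    funext u; rw [hx u]
  have hxd : ∀ t : ℝ, HasDerivAt x (A *ᵥ x t) t := by
    intro t
    have h := hasDerivAt_expMulVec A x₀ t
    rw [hxfun, ← hx t] at h
    exact h
  -- matrix identity in the needed form
  have hM : Aᵀ * Qtil + Qtil * A = Mg - Mf := by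
    rw [hMg, hMf, hkey, hAdef]; abel
  -- derivative of V
  have hVd : ∀ t : ℝ, HasDerivAt V (g t - f t) t := by
    intro t
    have h := hasDerivAt_quadForm (hxd t) Qtil
    have heq : (A *ᵥ x t) ⬝ᵥ (Qtil *ᵥ x t) + x t ⬝ᵥ (Qtil *ᵥ (A *ᵥ x t)) = g t - f t := by
      rw [dot_mulVec_left, Matrix.mulVec_mulVec, Matrix.mulVec_mulVec, ← dotProduct_add,
        ← Matrix.add_mulVec, hM, Matrix.sub_mulVec, dotProduct_sub]
    rw [heq] at h
    exact h
  -- positive semidefiniteness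
  have hMgpsd : Mg.PosSemidef := by
    have h := hQuu.posSemidef.conjTranspose_mul_mul_same (Fd - Fc)
    rwa [Matrix.conjTranspose_eq_transpose_of_trivial] at h
  have hMfpsd : Mf.PosSemidef := by
    have h := hQuu.posSemidef.conjTranspose_mul_mul_same Fd
    rw [Matrix.conjTranspose_eq_transpose_of_trivial] at h
    exact hQxx.add h
  have hg0 : ∀ t, 0 ≤ g t := fun t => by simpa using hMgpsd.dotProduct_mulVec_nonneg (x t)
  have hf0 : ∀ t, 0 ≤ f t := fun t => by simpa using hMfpsd.dotProduct_mulVec_nonneg (x t)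
  -- decay bound on ‖x t‖²
  have hxb : ∀ t : ℝ, 0 ≤ t → _root_.enorm (x t) ^ 2 ≤ Real.exp (-β * t) * _root_.enorm x₀ ^ 2 := by
    intro t ht
    rw [hx t]
    calc _root_.enorm (NormedSpace.exp (t • A) *ᵥ x₀) ^ 2
        ≤ (specNorm (NormedSpace.exp (t • A)) * _root_.enorm x₀) ^ 2 := by
          apply pow_le_pow_left₀ (enorm_nonneg' _) (enorm_mulVec_le _ _)
      _ = specNorm (NormedSpace.exp (t • A)) ^ 2 * _root_.enorm x₀ ^ 2 := by ring
      _ ≤ Real.exp (-β * t) * _root_.enorm x₀ ^ 2 :=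
          mul_le_mul_of_nonneg_right (hdecay t ht) (sq_nonneg _)
  have hquad : ∀ (M : Matrix (Fin n) (Fin n) ℝ) (t : ℝ), 0 ≤ t →
      |x t ⬝ᵥ (M *ᵥ x t)| ≤ specNorm M * _root_.enorm x₀ ^ 2 * Real.exp (-β * t) := by
    intro M t ht
    calc |x t ⬝ᵥ (M *ᵥ x t)| ≤ specNorm M * _root_.enorm (x t) ^ 2 := abs_quad_le_specNorm M (x t)
      _ ≤ specNorm M * (Real.exp (-β * t) * _root_.enorm x₀ ^ 2) :=
          mul_le_mul_of_nonneg_left (hxb t ht) (specNorm_nonneg M)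
      _ = specNorm M * _root_.enorm x₀ ^ 2 * Real.exp (-β * t) := by ring
  -- continuity
  have hgcont : Continuous g := continuous_iff_continuousAt.mpr fun t =>
    (hasDerivAt_quadForm (hxd t) Mg).continuousAt
  have hfcont : Continuous f := continuous_iff_continuousAt.mpr fun t =>
    (hasDerivAt_quadForm (hxd t) Mf).continuousAt
  -- integrability
  have hintM : ∀ (M : Matrix (Fin n) (Fin n) ℝ), Continuous (fun t => x t ⬝ᵥ (M *ᵥ x t)) →
      IntegrableOn (fun t => x t ⬝ᵥ (M *ᵥ x t)) (Set.Ioi (0:ℝ)) := by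
    intro M hc
    apply Integrable.mono' ((exp_neg_integrableOn_Ioi 0 hβ).const_mul
      (specNorm M * _root_.enorm x₀ ^ 2))
    · exact hc.aestronglyMeasurable
    · filter_upwards [ae_restrict_mem measurableSet_Ioi] with t ht
      have := hquad M t (le_of_lt ht)
      simpa [Real.norm_eq_abs, mul_comm] using this
  have hgint : IntegrableOn g (Set.Ioi (0:ℝ)) := hintM Mg hgcont
  have hfint : IntegrableOn f (Set.Ioi (0:ℝ)) := hintM Mf hfcont
  have hVint : IntegrableOn (fun t => g t - f t) (Set.Ioi (0:ℝ)) := hgint.sub hfint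
  -- V tends to 0
  have hVtend : Filter.Tendsto V Filter.atTop (nhds 0) := by
    have hb : Filter.Tendsto (fun t => specNorm Qtil * _root_.enorm x₀ ^ 2 * Real.exp (-β * t))
        Filter.atTop (nhds 0) := by
      have h1 : Filter.Tendsto (fun t : ℝ => β * t) Filter.atTop Filter.atTop :=
        Filter.Tendsto.const_mul_atTop hβ Filter.tendsto_id
      have h2 : Filter.Tendsto (fun t : ℝ => Real.exp (-β * t)) Filter.atTop (nhds 0) :=
        (Real.tendsto_exp_neg_atTop_nhds_zero.comp h1).congr fun t => by
          simp [Function.comp, neg_mul]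
      have := h2.const_mul (specNorm Qtil * _root_.enorm x₀ ^ 2)
      simpa using this
    apply squeeze_zero_norm' _ hb
    filter_upwards [Filter.eventually_ge_atTop (0:ℝ)] with t ht
    exact hquad Qtil t ht
  -- V 0 = Jc
  have hV0 : V 0 = Jc := by
    have hx0 : x 0 = x₀ := by
      rw [hx 0]; simp [NormedSpace.exp_zero]
    rw [hV]; simp only [hx0]; rw [hJc]
  -- improper integral of V'
  have hVop : ∫ t in Set.Ioi (0:ℝ), (g t - f t) = 0 - V 0 :=
    integral_Ioi_of_hasDerivAt_of_tendsto (hVd 0).continuousAt.continuousWithinAt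
      (fun s _ => hVd s) hVint hVtend
  -- main identity : Jd - Jc = ∫ g
  have hmain : Jd - Jc = ∫ t in Set.Ioi (0:ℝ), g t := by
    have h1 : ∫ t in Set.Ioi (0:ℝ), (g t - (g t - f t)) =
        (∫ t in Set.Ioi (0:ℝ), g t) - ∫ t in Set.Ioi (0:ℝ), (g t - f t) :=
      integral_sub hgint hVint
    simp only [sub_sub_cancel] at h1
    have h2 : Jd = ∫ t in Set.Ioi (0:ℝ), f t := by
      rw [hJd, ← integral_Ici_eq_integral_Ioi]
    rw [h2, h1, hVop, hV0]
    ring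
  refine ⟨?_, ?_, ?_⟩
  · rw [hmain]
    exact setIntegral_nonneg measurableSet_Ioi fun t _ => hg0 t
  · rw [hmain]
    have hexpint : ∫ t in Set.Ioi (0:ℝ), Real.exp (-β * t) = 1 / β := by
      have hderiv : ∀ s ∈ Set.Ici (0:ℝ),
          HasDerivAt (fun u => -Real.exp (-β * u) / β) (Real.exp (-β * s)) s := by
        intro s _
        have h1 : HasDerivAt (fun u : ℝ => -β * u) (-β) s := by
          simpa using (hasDerivAt_id s).const_mul (-β)
        have h2 : HasDerivAt (fun u : ℝ => Real.exp (-β * u))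
            (Real.exp (-β * s) * (-β)) s := (Real.hasDerivAt_exp (-β * s)).comp s h1
        have h3 := (h2.neg).div_const β
        exact h3.congr_deriv (by rw [mul_neg, neg_neg, mul_div_assoc, div_self hβ.ne', mul_one])
      have htend : Filter.Tendsto (fun u : ℝ => -Real.exp (-β * u) / β)
          Filter.atTop (nhds 0) := by
        have h1 : Filter.Tendsto (fun t : ℝ => β * t) Filter.atTop Filter.atTop :=
          Filter.Tendsto.const_mul_atTop hβ Filter.tendsto_id
        have h2 : Filter.Tendsto (fun t : ℝ => Real.exp (-β * t)) Filter.atTop (nhds 0) :=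
          (Real.tendsto_exp_neg_atTop_nhds_zero.comp h1).congr fun t => by
            simp [Function.comp, neg_mul]
        have := (h2.neg).div_const β
        simpa using this
      have := integral_Ioi_of_hasDerivAt_of_tendsto' hderiv (exp_neg_integrableOn_Ioi 0 hβ) htend
      rw [this]
      simp [neg_div]
    have hle : ∫ t in Set.Ioi (0:ℝ), g t ≤
        ∫ t in Set.Ioi (0:ℝ), specNorm Mg * _root_.enorm x₀ ^ 2 * Real.exp (-β * t) := by
      apply setIntegral_mono_on hgint
        (((exp_neg_integrableOn_Ioi 0 hβ)).const_mul (specNorm Mg * _root_.enorm x₀ ^ 2))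
        measurableSet_Ioi
      intro t ht
      exact le_trans (le_abs_self _) (hquad Mg t (le_of_lt ht))
    calc ∫ t in Set.Ioi (0:ℝ), g t
        ≤ ∫ t in Set.Ioi (0:ℝ), specNorm Mg * _root_.enorm x₀ ^ 2 * Real.exp (-β * t) := hle
      _ = specNorm Mg * _root_.enorm x₀ ^ 2 * (1 / β) := by
          rw [← hexpint, ← integral_const_mul]
      _ = specNorm Mg / β * _root_.enorm x₀ ^ 2 := by ring
  · rintro ⟨t₀, ht₀, hne⟩
    have hgt₀ : 0 < g t₀ := by
      have heq : g t₀ = ((Fd - Fc) *ᵥ x t₀) ⬝ᵥ (Quu *ᵥ ((Fd - Fc) *ᵥ x t₀)) := by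
        show x t₀ ⬝ᵥ (Mg *ᵥ x t₀) = _
        rw [hMg, ← Matrix.mulVec_mulVec, ← Matrix.mulVec_mulVec, ← dot_mulVec_left]
      rw [heq]
      simpa using hQuu.dotProduct_mulVec_pos hne
    rw [hmain]
    rw [setIntegral_pos_iff_support_of_nonneg_ae (ae_of_all _ fun t => hg0 t) hgint]
    have hopen : IsOpen (Function.support g ∩ Set.Ioi 0) := by
      have h1 : IsOpen (Function.support g) := by
        have : Function.support g = g ⁻¹' {(0:ℝ)}ᶜ := by
          ext t; simp [Function.mem_support]
        rw [this]
        exact isOpen_compl_singleton.preimage hgcont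
      exact h1.inter isOpen_Ioi
    have hne' : (Function.support g ∩ Set.Ioi 0).Nonempty := by
      have hev : ∀ᶠ s in nhdsWithin t₀ (Set.Ioi t₀), g s ≠ 0 :=
        (hgcont.continuousAt.eventually_ne hgt₀.ne').filter_mono nhdsWithin_le_nhds
      obtain ⟨s, hs1, hs2⟩ := (hev.and (eventually_mem_nhdsWithin)).exists
      exact ⟨s, hs1, lt_of_le_of_lt ht₀ hs2⟩
    exact hopen.measure_pos volume hne'
end
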